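/- The kinetic distance $d_{\mathrm{kin}}$ on $\mathbb{R}^{1+2d}$ satisfies the triangle inequality: for all $z_1, z_2, z_3$, $d_{\mathrm{kin}}(z_1,z_2) \le d_{\mathrm{kin}}(z_1,z_3) + d_{\mathrm{kin}}(z_3,z_2)$. Together with symmetry and positivity this makes $d_{\mathrm{kin}}$ a distance. -/

import Mathlib

set_option maxHeartbeats 1000000

/-- A point of the kinetic phase space `ℝ × ℝᵈ × ℝᵈ` (time, position, velocity). -/
abbrev KPt (d : ℕ) := ℝ × EuclideanSpace ℝ (Fin d) × EuclideanSpace ℝ (Fin d)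

/-- The Galilean group operation `z₀ ∘ z = (t₀ + t, x₀ + x + t v₀, v₀ + v)`. -/
noncomputable def kOp {d : ℕ} (z₀ z : KPt d) : KPt d :=
  (z₀.1 + z.1, z₀.2.1 + z.2.1 + z.1 • z₀.2.2, z₀.2.2 + z.2.2)

/-- The Galilean inverse `z⁻¹ = (-t, -x + t v, -v)`. -/
noncomputable def kInv {d : ℕ} (z : KPt d) : KPt d :=
  (-z.1, -z.2.1 + z.1 • z.2.2, -z.2.2)

/-- The kinetic cylinder `Q_r = (-r², 0] × B_{r³} × B_r` centered at the origin. -/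
def kCyl (d : ℕ) (r : ℝ) : Set (KPt d) :=
  Set.Ioc (-r ^ 2) 0 ×ˢ Metric.ball 0 (r ^ 3) ×ˢ Metric.ball 0 r

/-- The kinetic cylinder `Q_r(z₀) = {z₀ ∘ ζ : ζ ∈ Q_r}` centered at `z₀`. -/
def kCylAt {d : ℕ} (z₀ : KPt d) (r : ℝ) : Set (KPt d) := kOp z₀ '' kCyl d r

/-- The kinetic distance: the infimum of the radii `r > 0` such that both points belong
to a common kinetic cylinder `Q_r(z)`. -/
noncomputable def kdist {d : ℕ} (z₁ z₂ : KPt d) : ℝ :=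
  sInf {r : ℝ | 0 < r ∧ ∃ z : KPt d, z₁ ∈ kCylAt z r ∧ z₂ ∈ kCylAt z r}

lemma mem_kCylAt_iff {d : ℕ} (w z : KPt d) (r : ℝ) :
    z ∈ kCylAt w r ↔
      (-r ^ 2 < z.1 - w.1 ∧ z.1 - w.1 ≤ 0) ∧
      ‖z.2.1 - w.2.1 - (z.1 - w.1) • w.2.2‖ < r ^ 3 ∧
      ‖z.2.2 - w.2.2‖ < r := by
  constructor
  · rintro ⟨ζ, hζ, rfl⟩
    simp only [kCyl, Set.mem_prod, Set.mem_Ioc, Metric.mem_ball, dist_zero_right] at hζ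
    obtain ⟨⟨ht1, ht2⟩, hx, hv⟩ := hζ
    simp only [kOp]
    refine ⟨⟨by simp; linarith, by simp; linarith⟩, ?_, ?_⟩
    · convert hx using 2
      · rfl
      abel_nf
    · convert hv using 2
      · rfl
      abel
  · rintro ⟨⟨ht1, ht2⟩, hx, hv⟩
    refine ⟨(z.1 - w.1, z.2.1 - w.2.1 - (z.1 - w.1) • w.2.2, z.2.2 - w.2.2), ?_, ?_⟩
    · simp only [kCyl, Set.mem_prod, Set.mem_Ioc, Metric.mem_ball, dist_zero_right]
      exact ⟨⟨ht1, ht2⟩, hx, hv⟩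
    · simp only [kOp]
      ext <;> simp <;> abel

lemma kdist_key {d : ℕ} {z₁ z₂ z₃ : KPt d} {r₁ r₂ : ℝ} (hr₁ : 0 < r₁) (hr₂ : 0 < r₂)
    {w₁ w₂ : KPt d} (h11 : z₁ ∈ kCylAt w₁ r₁) (h13 : z₃ ∈ kCylAt w₁ r₁)
    (h23 : z₃ ∈ kCylAt w₂ r₂) (h22 : z₂ ∈ kCylAt w₂ r₂) :
    ∃ w : KPt d, z₁ ∈ kCylAt w (r₁ + r₂) ∧ z₂ ∈ kCylAt w (r₁ + r₂) := by
  rw [mem_kCylAt_iff] at h11 h13 h23 h22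
  obtain ⟨⟨h11t, h11t'⟩, h11x, h11v⟩ := h11
  obtain ⟨⟨h13t, h13t'⟩, h13x, h13v⟩ := h13
  obtain ⟨⟨h23t, h23t'⟩, h23x, h23v⟩ := h23
  obtain ⟨⟨h22t, h22t'⟩, h22x, h22v⟩ := h22
  set R := r₁ + r₂ with hR
  have hRpos : 0 < R := by positivity
  set τ : ℝ := max w₁.1 w₂.1 with hτ
  set ω : EuclideanSpace ℝ (Fin d) := w₁.2.2 + (r₂ / R) • (w₂.2.2 - w₁.2.2) with hω
  set ξ : EuclideanSpace ℝ (Fin d) :=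
    (2:ℝ)⁻¹ • ((z₁.2.1 - (z₁.1 - τ) • ω) + (z₂.2.1 - (z₂.1 - τ) • ω)) with hξ
  -- time bounds on τ
  have hτ1 : τ ≤ w₁.1 + r₂ ^ 2 := max_le (by nlinarith) (by linarith)
  have hτ2 : τ ≤ w₂.1 + r₁ ^ 2 := max_le (by linarith) (by nlinarith)
  have hτw1 : w₁.1 ≤ τ := le_max_left _ _
  have hτw2 : w₂.1 ≤ τ := le_max_right _ _
  -- velocity bounds
  have hωd : ‖w₂.2.2 - w₁.2.2‖ < R := by
    have h : w₂.2.2 - w₁.2.2 = (z₃.2.2 - w₁.2.2) - (z₃.2.2 - w₂.2.2) := by abel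
    rw [h]
    calc ‖(z₃.2.2 - w₁.2.2) - (z₃.2.2 - w₂.2.2)‖
        ≤ ‖z₃.2.2 - w₁.2.2‖ + ‖z₃.2.2 - w₂.2.2‖ := norm_sub_le _ _
      _ < R := by rw [hR]; linarith
  have hω1 : ‖ω - w₁.2.2‖ ≤ r₂ := by
    have h : ω - w₁.2.2 = (r₂ / R) • (w₂.2.2 - w₁.2.2) := by rw [hω]; abel
    rw [h, norm_smul, Real.norm_eq_abs, abs_of_pos (by positivity)]
    calc r₂ / R * ‖w₂.2.2 - w₁.2.2‖ ≤ r₂ / R * R := by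
          apply mul_le_mul_of_nonneg_left hωd.le (by positivity)
      _ = r₂ := by field_simp
  have hω2 : ‖ω - w₂.2.2‖ ≤ r₁ := by
    have h : ω - w₂.2.2 = (-(r₁ / R)) • (w₂.2.2 - w₁.2.2) := by
      rw [hω]
      have : r₂ / R - 1 = -(r₁ / R) := by field_simp; ring
      rw [← this]
      module
    rw [h, norm_smul, Real.norm_eq_abs, abs_neg, abs_of_pos (by positivity)]
    calc r₁ / R * ‖w₂.2.2 - w₁.2.2‖ ≤ r₁ / R * R := by
          apply mul_le_mul_of_nonneg_left hωd.le (by positivity)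
      _ = r₁ := by field_simp
  -- main position estimate
  have hid : (z₁.2.1 - z₂.2.1) - (z₁.1 - z₂.1) • ω =
      (z₁.2.1 - w₁.2.1 - (z₁.1 - w₁.1) • w₁.2.2)
      - (z₃.2.1 - w₁.2.1 - (z₃.1 - w₁.1) • w₁.2.2)
      + (z₃.2.1 - w₂.2.1 - (z₃.1 - w₂.1) • w₂.2.2)
      - (z₂.2.1 - w₂.2.1 - (z₂.1 - w₂.1) • w₂.2.2)
      - (z₁.1 - z₃.1) • (ω - w₁.2.2)
      - (z₃.1 - z₂.1) • (ω - w₂.2.2) := by module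
  have hS1 : ‖(z₁.1 - z₃.1) • (ω - w₁.2.2)‖ ≤ r₁ ^ 2 * r₂ := by
    rw [norm_smul, Real.norm_eq_abs]
    have habs : |z₁.1 - z₃.1| ≤ r₁ ^ 2 := abs_le.mpr ⟨by linarith, by linarith⟩
    exact mul_le_mul habs hω1 (norm_nonneg _) (by positivity)
  have hS2 : ‖(z₃.1 - z₂.1) • (ω - w₂.2.2)‖ ≤ r₂ ^ 2 * r₁ := by
    rw [norm_smul, Real.norm_eq_abs]
    have habs : |z₃.1 - z₂.1| ≤ r₂ ^ 2 := abs_le.mpr ⟨by linarith, by linarith⟩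
    exact mul_le_mul habs hω2 (norm_nonneg _) (by positivity)
  have hD : ‖(z₁.2.1 - z₂.2.1) - (z₁.1 - z₂.1) • ω‖ < 2 * R ^ 3 := by
    rw [hid]
    have n1 := norm_sub_le ((z₁.2.1 - w₁.2.1 - (z₁.1 - w₁.1) • w₁.2.2)
      - (z₃.2.1 - w₁.2.1 - (z₃.1 - w₁.1) • w₁.2.2)
      + (z₃.2.1 - w₂.2.1 - (z₃.1 - w₂.1) • w₂.2.2)
      - (z₂.2.1 - w₂.2.1 - (z₂.1 - w₂.1) • w₂.2.2)
      - (z₁.1 - z₃.1) • (ω - w₁.2.2)) ((z₃.1 - z₂.1) • (ω - w₂.2.2))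
    have n2 := norm_sub_le ((z₁.2.1 - w₁.2.1 - (z₁.1 - w₁.1) • w₁.2.2)
      - (z₃.2.1 - w₁.2.1 - (z₃.1 - w₁.1) • w₁.2.2)
      + (z₃.2.1 - w₂.2.1 - (z₃.1 - w₂.1) • w₂.2.2)
      - (z₂.2.1 - w₂.2.1 - (z₂.1 - w₂.1) • w₂.2.2)) ((z₁.1 - z₃.1) • (ω - w₁.2.2))
    have n3 := norm_sub_le ((z₁.2.1 - w₁.2.1 - (z₁.1 - w₁.1) • w₁.2.2)
      - (z₃.2.1 - w₁.2.1 - (z₃.1 - w₁.1) • w₁.2.2)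
      + (z₃.2.1 - w₂.2.1 - (z₃.1 - w₂.1) • w₂.2.2))
      (z₂.2.1 - w₂.2.1 - (z₂.1 - w₂.1) • w₂.2.2)
    have n4 := norm_add_le ((z₁.2.1 - w₁.2.1 - (z₁.1 - w₁.1) • w₁.2.2)
      - (z₃.2.1 - w₁.2.1 - (z₃.1 - w₁.1) • w₁.2.2))
      (z₃.2.1 - w₂.2.1 - (z₃.1 - w₂.1) • w₂.2.2)
    have n5 := norm_sub_le (z₁.2.1 - w₁.2.1 - (z₁.1 - w₁.1) • w₁.2.2)
      (z₃.2.1 - w₁.2.1 - (z₃.1 - w₁.1) • w₁.2.2)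
    have hRcube : 2 * r₁ ^ 3 + 2 * r₂ ^ 3 + r₁ ^ 2 * r₂ + r₂ ^ 2 * r₁ ≤ 2 * R ^ 3 := by
      rw [hR]; nlinarith
    linarith
  clear_value R τ ω ξ
  refine ⟨(τ, ξ, ω), ?_, ?_⟩
  · rw [mem_kCylAt_iff]
    refine ⟨⟨by simp only; nlinarith, by simp only; linarith⟩, ?_, ?_⟩
    · show ‖z₁.2.1 - ξ - (z₁.1 - τ) • ω‖ < R ^ 3
      have h : z₁.2.1 - ξ - (z₁.1 - τ) • ω =
          (2:ℝ)⁻¹ • ((z₁.2.1 - z₂.2.1) - (z₁.1 - z₂.1) • ω) := by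
        rw [hξ]; module
      rw [h, norm_smul, Real.norm_eq_abs]
      rw [abs_of_pos (by norm_num : (0:ℝ) < (2:ℝ)⁻¹)]
      set N := ‖z₁.2.1 - z₂.2.1 - (z₁.1 - z₂.1) • ω‖ with hN
      linarith
    · show ‖z₁.2.2 - ω‖ < R
      have h : z₁.2.2 - ω = (z₁.2.2 - w₁.2.2) - (ω - w₁.2.2) := by abel
      rw [h]
      calc ‖(z₁.2.2 - w₁.2.2) - (ω - w₁.2.2)‖
          ≤ ‖z₁.2.2 - w₁.2.2‖ + ‖ω - w₁.2.2‖ := norm_sub_le _ _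
        _ < R := by rw [hR]; linarith
  · rw [mem_kCylAt_iff]
    refine ⟨⟨by simp only; nlinarith, by simp only; linarith⟩, ?_, ?_⟩
    · show ‖z₂.2.1 - ξ - (z₂.1 - τ) • ω‖ < R ^ 3
      have h : z₂.2.1 - ξ - (z₂.1 - τ) • ω =
          (-(2:ℝ)⁻¹) • ((z₁.2.1 - z₂.2.1) - (z₁.1 - z₂.1) • ω) := by
        rw [hξ]; module
      rw [h, norm_smul, Real.norm_eq_abs, abs_neg]
      rw [abs_of_pos (by norm_num : (0:ℝ) < (2:ℝ)⁻¹)]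
      set N := ‖z₁.2.1 - z₂.2.1 - (z₁.1 - z₂.1) • ω‖ with hN
      linarith
    · show ‖z₂.2.2 - ω‖ < R
      have h : z₂.2.2 - ω = (z₂.2.2 - w₂.2.2) - (ω - w₂.2.2) := by abel
      rw [h]
      calc ‖(z₂.2.2 - w₂.2.2) - (ω - w₂.2.2)‖
          ≤ ‖z₂.2.2 - w₂.2.2‖ + ‖ω - w₂.2.2‖ := norm_sub_le _ _
        _ < R := by rw [hR]; linarith

lemma kdist_set_nonempty {d : ℕ} (z z' : KPt d) :
    {r : ℝ | 0 < r ∧ ∃ w : KPt d, z ∈ kCylAt w r ∧ z' ∈ kCylAt w r}.Nonempty := by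
  set τ : ℝ := max z.1 z'.1 with hτ
  set ω : EuclideanSpace ℝ (Fin d) := (2:ℝ)⁻¹ • (z.2.2 + z'.2.2) with hω
  set ξ : EuclideanSpace ℝ (Fin d) :=
    (2:ℝ)⁻¹ • ((z.2.1 - (z.1 - τ) • ω) + (z'.2.1 - (z'.1 - τ) • ω)) with hξ
  set r : ℝ := 1 + |z.1 - z'.1| + ‖z.2.2 - z'.2.2‖
    + ‖(z.2.1 - z'.2.1) - (z.1 - z'.1) • ω‖ with hr
  have h1 : (1:ℝ) ≤ r := by
    have := abs_nonneg (z.1 - z'.1)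
    have := norm_nonneg (z.2.2 - z'.2.2)
    have := norm_nonneg ((z.2.1 - z'.2.1) - (z.1 - z'.1) • ω)
    rw [hr]; linarith
  have hrpos : 0 < r := by linarith
  have habs : |z.1 - z'.1| ≤ r - 1 := by
    have := norm_nonneg (z.2.2 - z'.2.2)
    have := norm_nonneg ((z.2.1 - z'.2.1) - (z.1 - z'.1) • ω)
    rw [hr]; linarith
  have hv : ‖z.2.2 - z'.2.2‖ ≤ r - 1 := by
    have := abs_nonneg (z.1 - z'.1)
    have := norm_nonneg ((z.2.1 - z'.2.1) - (z.1 - z'.1) • ω)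
    rw [hr]; linarith
  have hx : ‖(z.2.1 - z'.2.1) - (z.1 - z'.1) • ω‖ ≤ r - 1 := by
    have := abs_nonneg (z.1 - z'.1)
    have := norm_nonneg (z.2.2 - z'.2.2)
    rw [hr]; linarith
  have hr2 : r ≤ r ^ 2 := by nlinarith
  have hr3 : r ≤ r ^ 3 := by nlinarith
  have habs' := abs_le.mp habs
  clear_value τ ω ξ r
  refine ⟨r, hrpos, (τ, ξ, ω), ?_, ?_⟩
  · rw [mem_kCylAt_iff]
    refine ⟨⟨?_, ?_⟩, ?_, ?_⟩
    · show -r ^ 2 < z.1 - τ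
      have h1' : τ ≤ z.1 + |z.1 - z'.1| := by
        rw [hτ]
        refine max_le (by linarith [abs_nonneg (z.1 - z'.1)]) ?_
        have := neg_abs_le (z.1 - z'.1); linarith
      nlinarith
    · show z.1 - τ ≤ 0
      have := le_max_left z.1 z'.1; linarith
    · show ‖z.2.1 - ξ - (z.1 - τ) • ω‖ < r ^ 3
      have h : z.2.1 - ξ - (z.1 - τ) • ω =
          (2:ℝ)⁻¹ • ((z.2.1 - z'.2.1) - (z.1 - z'.1) • ω) := by
        rw [hξ]; module
      rw [h, norm_smul, Real.norm_eq_abs, abs_of_pos (by norm_num : (0:ℝ) < (2:ℝ)⁻¹)]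
      nlinarith [norm_nonneg ((z.2.1 - z'.2.1) - (z.1 - z'.1) • ω)]
    · show ‖z.2.2 - ω‖ < r
      have h : z.2.2 - ω = (2:ℝ)⁻¹ • (z.2.2 - z'.2.2) := by rw [hω]; module
      rw [h, norm_smul, Real.norm_eq_abs, abs_of_pos (by norm_num : (0:ℝ) < (2:ℝ)⁻¹)]
      nlinarith [norm_nonneg (z.2.2 - z'.2.2)]
  · rw [mem_kCylAt_iff]
    refine ⟨⟨?_, ?_⟩, ?_, ?_⟩
    · show -r ^ 2 < z'.1 - τ
      have h1' : τ ≤ z'.1 + |z.1 - z'.1| := by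
        rw [hτ]
        refine max_le ?_ (by linarith [abs_nonneg (z.1 - z'.1)])
        have := le_abs_self (z.1 - z'.1); linarith
      nlinarith
    · show z'.1 - τ ≤ 0
      have := le_max_right z.1 z'.1; linarith
    · show ‖z'.2.1 - ξ - (z'.1 - τ) • ω‖ < r ^ 3
      have h : z'.2.1 - ξ - (z'.1 - τ) • ω =
          (-(2:ℝ)⁻¹) • ((z.2.1 - z'.2.1) - (z.1 - z'.1) • ω) := by
        rw [hξ]; module
      rw [h, norm_smul, Real.norm_eq_abs, abs_neg,
        abs_of_pos (by norm_num : (0:ℝ) < (2:ℝ)⁻¹)]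
      nlinarith [norm_nonneg ((z.2.1 - z'.2.1) - (z.1 - z'.1) • ω)]
    · show ‖z'.2.2 - ω‖ < r
      have h : z'.2.2 - ω = (-(2:ℝ)⁻¹) • (z.2.2 - z'.2.2) := by rw [hω]; module
      rw [h, norm_smul, Real.norm_eq_abs, abs_neg,
        abs_of_pos (by norm_num : (0:ℝ) < (2:ℝ)⁻¹)]
      nlinarith [norm_nonneg (z.2.2 - z'.2.2)]

lemma kdist_set_bddBelow {d : ℕ} (z z' : KPt d) :
    BddBelow {r : ℝ | 0 < r ∧ ∃ w : KPt d, z ∈ kCylAt w r ∧ z' ∈ kCylAt w r} :=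
  ⟨0, fun r hr => hr.1.le⟩

/-- The triangle inequality for the kinetic distance. -/
theorem stmt16 {d : ℕ} (z₁ z₂ z₃ : KPt d) :
    kdist z₁ z₂ ≤ kdist z₁ z₃ + kdist z₃ z₂ := by
  have hne13 := kdist_set_nonempty z₁ z₃
  have hne32 := kdist_set_nonempty z₃ z₂
  have key : ∀ r₁ ∈ {r : ℝ | 0 < r ∧ ∃ w : KPt d, z₁ ∈ kCylAt w r ∧ z₃ ∈ kCylAt w r},
      ∀ r₂ ∈ {r : ℝ | 0 < r ∧ ∃ w : KPt d, z₃ ∈ kCylAt w r ∧ z₂ ∈ kCylAt w r},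
      kdist z₁ z₂ ≤ r₁ + r₂ := by
    rintro r₁ ⟨hr₁, w₁, h11, h13⟩ r₂ ⟨hr₂, w₂, h23, h22⟩
    obtain ⟨w, hw1, hw2⟩ := kdist_key hr₁ hr₂ h11 h13 h23 h22
    exact csInf_le (kdist_set_bddBelow z₁ z₂) ⟨by linarith, w, hw1, hw2⟩
  have h1 : ∀ r₁ ∈ {r : ℝ | 0 < r ∧ ∃ w : KPt d, z₁ ∈ kCylAt w r ∧ z₃ ∈ kCylAt w r},
      kdist z₁ z₂ - r₁ ≤ kdist z₃ z₂ := by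
    intro r₁ h₁
    exact le_csInf hne32 fun r₂ h₂ => by linarith [key r₁ h₁ r₂ h₂]
  have h2 : kdist z₁ z₂ - kdist z₃ z₂ ≤ kdist z₁ z₃ :=
    le_csInf hne13 fun r₁ h₁ => by linarith [h1 r₁ h₁]
  linarith
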